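/- Let B be a commutative ring and f a monic polynomial of degree n over B with splitting algebra B_f and universal roots τ_1,...,τ_n. If the discriminant Dis(f) = ∏_{i>j}(τ_i - τ_j)^2 is a regular element (neither zero nor a zero divisor) of B_f, then the ring of invariants of B_f under the action of the symmetric group S_n is exactly B. -/

import Mathlib

open MvPolynomial Polynomial

/-- The ideal `(s₁ - f₁, ..., sₙ - fₙ)` defining the splitting algebra, where
`fᵢ = (-1)^i · coeff f (n - i)` are the signed coefficients of `f`. -/
noncomputable def splittingIdeal (A : Type*) [CommRing A] (f : Polynomial A) (n : ℕ) :
    Ideal (MvPolynomial (Fin n) A) :=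
  Ideal.span (Set.range fun i : Fin n =>
    esymm (Fin n) A ((i : ℕ) + 1) -
      MvPolynomial.C ((-1 : A) ^ ((i : ℕ) + 1) * f.coeff (n - ((i : ℕ) + 1))))

/-- The splitting algebra `A_f = A[t₁,...,tₙ]/(s₁ - f₁, ..., sₙ - fₙ)`. -/
noncomputable def SplittingAlgebra (A : Type*) [CommRing A] (f : Polynomial A) (n : ℕ) :=
  MvPolynomial (Fin n) A ⧸ splittingIdeal A f n

noncomputable instance (A : Type*) [CommRing A] (f : Polynomial A) (n : ℕ) :
    CommRing (SplittingAlgebra A f n) := Ideal.Quotient.commRing _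

noncomputable instance (R A : Type*) [CommSemiring R] [CommRing A] [Algebra R A]
    (f : Polynomial A) (n : ℕ) : Algebra R (SplittingAlgebra A f n) :=
  Ideal.Quotient.algebra R

/-- The universal roots `τᵢ` of `f` in the splitting algebra. -/
noncomputable def univRoot (A : Type*) [CommRing A] (f : Polynomial A) (n : ℕ) (i : Fin n) :
    SplittingAlgebra A f n :=
  Ideal.Quotient.mk (splittingIdeal A f n) (MvPolynomial.X i)

/-- The action of a permutation `σ` on the splitting algebra, sending `τᵢ` to `τ_{σ⁻¹ i}`. -/
noncomputable def permHom (A : Type*) [CommRing A] (f : Polynomial A) (n : ℕ)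
    (σ : Equiv.Perm (Fin n)) : SplittingAlgebra A f n →ₐ[A] SplittingAlgebra A f n :=
  Ideal.Quotient.liftₐ (splittingIdeal A f n)
    ((Ideal.Quotient.mkₐ A (splittingIdeal A f n)).comp
      (rename (σ.symm : Fin n → Fin n)))
    (by
      intro a ha
      have h : splittingIdeal A f n ≤ RingHom.ker
          ((Ideal.Quotient.mkₐ A (splittingIdeal A f n)).comp
            (rename (σ.symm : Fin n → Fin n))) := by
        rw [splittingIdeal, Ideal.span_le]
        rintro _ ⟨i, rfl⟩
        have : (rename (σ.symm : Fin n → Fin n))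
            (esymm (Fin n) A ((i : ℕ) + 1) -
              MvPolynomial.C ((-1 : A) ^ ((i : ℕ) + 1) * f.coeff (n - ((i : ℕ) + 1)))) =
            esymm (Fin n) A ((i : ℕ) + 1) -
              MvPolynomial.C ((-1 : A) ^ ((i : ℕ) + 1) * f.coeff (n - ((i : ℕ) + 1))) := by
          rw [map_sub, rename_esymm, rename_C]
        simp only [SetLike.mem_coe, RingHom.mem_ker, AlgHom.coe_comp, Function.comp_apply, this]
        rw [Ideal.Quotient.mkₐ_eq_mk, Ideal.Quotient.eq_zero_iff_mem]
        exact Ideal.subset_span ⟨i, rfl⟩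
      exact h ha)



namespace SplitAux
open Matrix

variable {R : Type*} [CommRing R] {n : ℕ}

/-- substitution X i ↦ X j -/
noncomputable def subst (R : Type*) [CommRing R] (n : ℕ) (i j : Fin n) :
    MvPolynomial (Fin n) R →ₐ[R] MvPolynomial (Fin n) R :=
  aeval (fun k => if k = i then X j else X k)

lemma subst_rename_swap (i j : Fin n) (y : MvPolynomial (Fin n) R) :
    subst R n i j (rename (Equiv.swap i j) y) = subst R n i j y := by
  have : (subst R n i j).comp ((rename (⇑(Equiv.swap i j))) : MvPolynomial (Fin n) R →ₐ[R] _)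
      = subst R n i j := by
    apply MvPolynomial.algHom_ext
    intro k
    simp only [AlgHom.comp_apply, rename_X, subst, MvPolynomial.aeval_X]
    rcases eq_or_ne k i with rfl | hki
    · rcases eq_or_ne k j with rfl | hkj
      · simp
      · simp [Equiv.swap_apply_left, hkj.symm]
    · rcases eq_or_ne k j with rfl | hkj
      · simp [Equiv.swap_apply_right, hki]
      · simp [Equiv.swap_apply_of_ne_of_ne hki hkj, hki]
  exact DFunLike.congr_fun this y

lemma dvd_sub_subst (i j : Fin n) (y : MvPolynomial (Fin n) R) :
    (X i - X j : MvPolynomial (Fin n) R) ∣ y - subst R n i j y := by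
  induction y using MvPolynomial.induction_on with
  | C a => simp [subst]
  | add p q hp hq =>
      have : p + q - subst R n i j (p + q) = (p - subst R n i j p) + (q - subst R n i j q) := by
        rw [map_add]; ring
      rw [this]; exact dvd_add hp hq
  | mul_X p k hp =>
      have : p * X k - subst R n i j (p * X k)
          = (p - subst R n i j p) * X k + subst R n i j p * (X k - subst R n i j (X k)) := by
        rw [_root_.map_mul]; ring
      rw [this]
      refine dvd_add (Dvd.dvd.mul_right hp _) (Dvd.dvd.mul_left ?_ _)
      simp only [subst, MvPolynomial.aeval_X]
      rcases eq_or_ne k i with rfl | hk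
      · simp
      · simp [hk]

lemma dvd_of_subst_eq_zero {i j : Fin n} {y : MvPolynomial (Fin n) R}
    (h : subst R n i j y = 0) : (X i - X j : MvPolynomial (Fin n) R) ∣ y := by
  have := dvd_sub_subst i j y
  rwa [h, sub_zero] at this

lemma subst_eq_zero_of_dvd {i j : Fin n} (hij : i ≠ j) {y : MvPolynomial (Fin n) R}
    (h : (X i - X j : MvPolynomial (Fin n) R) ∣ y) : subst R n i j y = 0 := by
  obtain ⟨z, rfl⟩ := h
  rw [_root_.map_mul]
  suffices hs : subst R n i j (X i - X j) = 0 by rw [hs, zero_mul]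
  simp [subst, hij.symm]


/-- antisymmetrization -/
noncomputable def asym (R : Type*) [CommRing R] (n : ℕ) (y : MvPolynomial (Fin n) R) :
    MvPolynomial (Fin n) R :=
  ∑ σ : Equiv.Perm (Fin n), ((Equiv.Perm.sign σ : ℤ) • rename (⇑σ) y)

lemma asym_def (y : MvPolynomial (Fin n) R) :
    asym R n y = ∑ σ : Equiv.Perm (Fin n), ((Equiv.Perm.sign σ : ℤ) • rename (⇑σ) y) := rfl

/-- the Vandermonde product -/
noncomputable def vand (R : Type*) [CommRing R] (n : ℕ) : MvPolynomial (Fin n) R :=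
  ∏ p ∈ Finset.univ.filter (fun p : Fin n × Fin n => p.2 < p.1), (X p.1 - X p.2)

lemma vand_def : vand R n = ∏ p ∈ Finset.univ.filter (fun p : Fin n × Fin n => p.2 < p.1),
    (X p.1 - X p.2) := rfl

lemma subst_asym {i j : Fin n} (hij : i ≠ j) (y : MvPolynomial (Fin n) R) :
    subst R n i j (asym R n y) = 0 := by
  rw [asym, map_sum]
  refine Finset.sum_ninvolution (fun σ => Equiv.swap i j * σ) ?_ ?_ (fun _ => Finset.mem_univ _) ?_
  · intro σ
    have h1 : (⇑(Equiv.swap i j * σ)) = ⇑(Equiv.swap i j) ∘ ⇑σ := rfl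
    rw [map_zsmul, map_zsmul, h1, ← rename_rename, subst_rename_swap]
    rw [Equiv.Perm.sign_mul, Equiv.Perm.sign_swap hij]
    push_cast
    rw [neg_one_mul, neg_smul, add_neg_cancel]
  · intro σ _ h
    have := congrArg (fun τ : Equiv.Perm (Fin n) => τ (σ⁻¹ i)) h
    simp only [Equiv.Perm.mul_apply, Equiv.Perm.coe_inv, Equiv.apply_symm_apply] at this
    rw [Equiv.swap_apply_left] at this
    exact hij this.symm
  · intro σ
    rw [← mul_assoc, Equiv.swap_mul_self, one_mul]

lemma rename_asym (σ : Equiv.Perm (Fin n)) (y : MvPolynomial (Fin n) R) :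
    rename (⇑σ) (asym R n y) = (Equiv.Perm.sign σ : ℤ) • asym R n y := by
  rw [asym, map_sum, Finset.smul_sum]
  refine Fintype.sum_equiv (Equiv.mulLeft σ) _ _ ?_
  intro π
  rw [map_zsmul, rename_rename]
  have h1 : ⇑σ ∘ ⇑π = ⇑((Equiv.mulLeft σ) π) := rfl
  rw [h1, smul_smul]
  congr 1
  have h2 : (Equiv.mulLeft σ) π = σ * π := rfl
  have h3 : (Equiv.Perm.sign σ : ℤ) * (Equiv.Perm.sign σ : ℤ) = 1 := by
    rw [← Units.val_mul, Int.units_mul_self, Units.val_one]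
  rw [h2, Equiv.Perm.sign_mul, Units.val_mul, ← mul_assoc, h3, one_mul]

/-- the Vandermonde matrix -/
noncomputable def vmat (R : Type*) [CommRing R] (n : ℕ) :
    Matrix (Fin n) (Fin n) (MvPolynomial (Fin n) R) :=
  Matrix.of fun i j : Fin n => (X j : MvPolynomial (Fin n) R) ^ (i : ℕ)

lemma prod_filter_lt {M : Type*} [CommMonoid M] (F : Fin n → Fin n → M) :
    ∏ p ∈ Finset.univ.filter (fun p : Fin n × Fin n => p.2 < p.1), F p.1 p.2
      = ∏ i : Fin n, ∏ j ∈ Finset.Ioi i, F j i := by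
  rw [Finset.prod_sigma']
  refine Finset.prod_nbij' (fun p => ⟨p.2, p.1⟩) (fun x => (x.2, x.1)) ?_ ?_ ?_ ?_ ?_
  · intro p hp
    simp only [Finset.mem_filter, Finset.mem_univ, true_and] at hp
    simp [Finset.mem_sigma, Finset.mem_Ioi, hp]
  · intro x hx
    simp only [Finset.mem_sigma, Finset.mem_univ, true_and, Finset.mem_Ioi] at hx
    simp [hx]
  · intro p _; rfl
  · intro x _; rfl
  · intro p _; rfl

lemma vand_eq_det : vand R n = (vmat R n).det := by
  have h : (vmat R n)ᵀ = Matrix.vandermonde (fun j : Fin n => (X j : MvPolynomial (Fin n) R)) := by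
    ext i j; rfl
  rw [vand, prod_filter_lt (fun a b => (X a - X b : MvPolynomial (Fin n) R)), ← Matrix.det_transpose, h, Matrix.det_vandermonde]

lemma asym_T_eq_vand : asym R n (∏ i : Fin n, (X i : MvPolynomial (Fin n) R) ^ (i : ℕ)) = vand R n := by
  rw [vand_eq_det, Matrix.det_apply, asym]
  refine Fintype.sum_equiv (Equiv.inv (Equiv.Perm (Fin n))) _ _ ?_
  intro σ
  simp only [Equiv.inv_apply]
  rw [Units.smul_def, Equiv.Perm.sign_inv]
  congr 1
  rw [map_prod]
  have h1 : ∀ i : Fin n, rename (⇑σ) ((X i : MvPolynomial (Fin n) R) ^ (i : ℕ))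
      = X (σ i) ^ (i : ℕ) := by intro i; rw [map_pow, rename_X]
  simp_rw [h1]
  have h2 : ∀ i : Fin n, vmat R n (σ⁻¹ i) i = X i ^ ((σ⁻¹ i : Fin n) : ℕ) := fun i => rfl
  rw [← Equiv.prod_comp σ (fun k => vmat R n (σ⁻¹ k) k)]
  refine Finset.prod_congr rfl fun i _ => ?_
  rw [h2 (σ i)]
  simp

lemma rename_vand (σ : Equiv.Perm (Fin n)) :
    rename (⇑σ) (vand R n) = (Equiv.Perm.sign σ : ℤ) • vand R n := by
  rw [vand_eq_det]
  have h0 : (rename (⇑σ)) (vmat R n).det = ((vmat R n).map (rename (⇑σ))).det :=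
    by exact RingHom.map_det _ _
  have h : (vmat R n).map (rename (⇑σ)) = (vmat R n).submatrix id σ := by
    ext i j
    simp [vmat, Matrix.map_apply, Matrix.submatrix_apply]
  rw [h0, h, Matrix.det_permute', zsmul_eq_mul]


lemma X_sub_X_ne_zero [Nontrivial R] {i j : Fin n} (hij : i ≠ j) :
    (X i - X j : MvPolynomial (Fin n) R) ≠ 0 := by
  intro h
  have h1 : MvPolynomial.coeff (Finsupp.single i 1) (X i - X j : MvPolynomial (Fin n) R) = 1 := by
    rw [MvPolynomial.coeff_sub, MvPolynomial.coeff_X_same, MvPolynomial.coeff_X, if_neg, sub_zero]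
    intro hs
    exact hij (Finsupp.single_left_injective one_ne_zero hs).symm
  rw [h, MvPolynomial.coeff_zero] at h1
  exact one_ne_zero h1.symm

lemma prime_X_sub_X {i j : Fin n} (hij : i ≠ j) :
    Prime (X i - X j : MvPolynomial (Fin n) ℤ) := by
  rw [← Ideal.span_singleton_prime (X_sub_X_ne_zero hij)]
  have hker : Ideal.span {(X i - X j : MvPolynomial (Fin n) ℤ)}
      = RingHom.ker (subst ℤ n i j).toRingHom := by
    ext y
    rw [Ideal.mem_span_singleton, RingHom.mem_ker]
    constructor
    · intro h; exact subst_eq_zero_of_dvd hij h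
    · intro h; exact dvd_of_subst_eq_zero h
  rw [hker]
  exact RingHom.ker_isPrime _

lemma subst_X_sub_X_ne_zero {p q : Fin n × Fin n} (hp : p.2 < p.1) (hq : q.2 < q.1)
    (hpq : p ≠ q) :
    subst ℤ n p.1 p.2 (X q.1 - X q.2) ≠ 0 := by
  rw [map_sub]
  simp only [subst, MvPolynomial.aeval_X]
  rcases eq_or_ne q.1 p.1 with h1 | h1
  · rcases eq_or_ne q.2 p.1 with h2 | h2
    · exact absurd (h2.trans h1.symm) hq.ne
    · rw [if_pos h1, if_neg h2]
      refine X_sub_X_ne_zero ?_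
      intro h
      exact hpq (Prod.ext_iff.mpr ⟨h1.symm, h⟩)
  · rcases eq_or_ne q.2 p.1 with h2 | h2
    · rw [if_neg h1, if_pos h2]
      refine X_sub_X_ne_zero ?_
      intro h
      rw [← h, ← h2] at hp
      exact absurd (hp.trans hq) (lt_irrefl _)
    · rw [if_neg h1, if_neg h2]
      exact X_sub_X_ne_zero hq.ne'

lemma prod_dvd_of_primes {ι : Type*} (s : Finset ι) (g : ι → MvPolynomial (Fin n) ℤ)
    (h : MvPolynomial (Fin n) ℤ)
    (hp : ∀ i ∈ s, Prime (g i)) (hnd : ∀ i ∈ s, ∀ j ∈ s, i ≠ j → ¬ g i ∣ g j)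
    (hd : ∀ i ∈ s, g i ∣ h) : (∏ i ∈ s, g i) ∣ h := by
  classical
  induction s using Finset.induction_on generalizing h with
  | empty => simp only [Finset.prod_empty]; exact one_dvd h
  | insert a s ha ih =>
    obtain ⟨h', rfl⟩ := hd a (Finset.mem_insert_self a s)
    rw [Finset.prod_insert ha]
    have hdvd' : ∀ i ∈ s, g i ∣ h' := by
      intro i hi
      have hia : i ≠ a := fun h => ha (h ▸ hi)
      have hh := hd i (Finset.mem_insert_of_mem hi)
      rcases (hp i (Finset.mem_insert_of_mem hi)).dvd_or_dvd hh with h1 | h1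
      · exact absurd h1 (hnd i (Finset.mem_insert_of_mem hi) a (Finset.mem_insert_self a s) hia)
      · exact h1
    exact mul_dvd_mul_left _ (ih h' (fun i hi => hp i (Finset.mem_insert_of_mem hi))
      (fun i hi j hj hij =>
        hnd i (Finset.mem_insert_of_mem hi) j (Finset.mem_insert_of_mem hj) hij) hdvd')

lemma vand_dvd_asym (y : MvPolynomial (Fin n) ℤ) : vand ℤ n ∣ asym ℤ n y := by
  rw [vand]
  refine prod_dvd_of_primes _ _ _ ?_ ?_ ?_
  · rintro p hp
    simp only [Finset.mem_filter, Finset.mem_univ, true_and] at hp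
    exact prime_X_sub_X hp.ne'
  · rintro p hp q hq hpq
    simp only [Finset.mem_filter, Finset.mem_univ, true_and] at hp hq
    intro hdvd
    exact subst_X_sub_X_ne_zero hp hq hpq (subst_eq_zero_of_dvd hp.ne' hdvd)
  · rintro p hp
    simp only [Finset.mem_filter, Finset.mem_univ, true_and] at hp
    exact dvd_of_subst_eq_zero (subst_asym hp.ne' _)

lemma vand_ne_zero : (vand ℤ n) ≠ 0 := by
  rw [vand]
  refine Finset.prod_ne_zero_iff.mpr ?_
  rintro p hp
  simp only [Finset.mem_filter, Finset.mem_univ, true_and] at hp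
  exact X_sub_X_ne_zero hp.ne'

lemma exists_symm_quotient (y : MvPolynomial (Fin n) ℤ) :
    ∃ Q : MvPolynomial (Fin n) ℤ, asym ℤ n y = vand ℤ n * Q ∧ Q.IsSymmetric := by
  obtain ⟨Q, hQ⟩ := vand_dvd_asym y
  refine ⟨Q, hQ, ?_⟩
  intro σ
  have h1 := rename_asym σ y
  rw [hQ, _root_.map_mul, rename_vand, smul_mul_assoc] at h1
  have h3 : (Equiv.Perm.sign σ : ℤ) * (Equiv.Perm.sign σ : ℤ) = 1 := by
    rw [← Units.val_mul, Int.units_mul_self, Units.val_one]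
  have h2 := congrArg (fun z => (Equiv.Perm.sign σ : ℤ) • z) h1
  simp only [smul_smul, h3, one_smul] at h2
  exact mul_left_cancel₀ vand_ne_zero h2



lemma asym_sum {ι : Type*} (s : Finset ι) (h : ι → MvPolynomial (Fin n) R) :
    asym R n (∑ i ∈ s, h i) = ∑ i ∈ s, asym R n (h i) := by
  simp only [asym, map_sum, Finset.smul_sum]
  exact Finset.sum_comm

lemma asym_C_mul (c : R) (y : MvPolynomial (Fin n) R) :
    asym R n (MvPolynomial.C c * y) = MvPolynomial.C c * asym R n y := by
  simp only [asym, _root_.map_mul, rename_C, Finset.mul_sum, mul_smul_comm]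

lemma map_asym (y : MvPolynomial (Fin n) ℤ) :
    MvPolynomial.map (Int.castRingHom R) (asym ℤ n y)
      = asym R n (MvPolynomial.map (Int.castRingHom R) y) := by
  simp only [asym, map_sum]
  refine Finset.sum_congr rfl fun σ _ => ?_
  rw [map_zsmul, map_rename]

lemma map_vand : MvPolynomial.map (Int.castRingHom R) (vand ℤ n) = vand R n := by
  simp only [vand, map_prod, map_sub, MvPolynomial.map_X]

end SplitAux


/-- quotient map into the splitting algebra, typed with codomain `SplittingAlgebra`. -/
noncomputable def mkS (B : Type*) [CommRing B] (f : Polynomial B) (n : ℕ) :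
    MvPolynomial (Fin n) B →+* SplittingAlgebra B f n :=
  Ideal.Quotient.mk (splittingIdeal B f n)

/-- If the discriminant `Dis(f) = ∏_{i>j} (τᵢ - τⱼ)²` is regular (neither zero nor a zero
divisor) in the splitting algebra `B_f`, then the ring of invariants of `B_f` under the
action of the symmetric group `Sₙ` is exactly `B`. -/
theorem invariants_eq_base_of_discriminant_regular {B : Type*} [CommRing B]
    (f : Polynomial B) (n : ℕ) (hmonic : f.Monic) (hdeg : f.natDegree = n)
    (hne : (∏ p ∈ Finset.univ.filter (fun p : Fin n × Fin n => p.2 < p.1),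
        (univRoot B f n p.1 - univRoot B f n p.2) ^ 2) ≠ 0)
    (hreg : (∏ p ∈ Finset.univ.filter (fun p : Fin n × Fin n => p.2 < p.1),
        (univRoot B f n p.1 - univRoot B f n p.2) ^ 2) ∈
      nonZeroDivisors (SplittingAlgebra B f n)) :
    ∀ x : SplittingAlgebra B f n,
      (∀ σ : Equiv.Perm (Fin n), permHom B f n σ x = x) ↔
        x ∈ (algebraMap B (SplittingAlgebra B f n)).range := by
  classical
  intro x
  constructor
  · intro hinv
    obtain ⟨P, rfl⟩ := Ideal.Quotient.mk_surjective x
    have hperm : ∀ (σ : Equiv.Perm (Fin n)) (Q : MvPolynomial (Fin n) B),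
        permHom B f n σ (mkS B f n Q)
          = mkS B f n (rename (⇑σ.symm) Q) := fun σ Q => rfl
    have hfix : ∀ σ : Equiv.Perm (Fin n),
        mkS B f n (rename (⇑σ) P) = mkS B f n P := by
      intro σ
      have h1 := hperm σ.symm P
      rw [Equiv.symm_symm] at h1
      rw [← h1]
      exact hinv σ.symm
    set D : SplittingAlgebra B f n := mkS B f n (SplitAux.vand B n) with hDdef
    have hD : (∏ p ∈ Finset.univ.filter (fun p : Fin n × Fin n => p.2 < p.1),
        (univRoot B f n p.1 - univRoot B f n p.2)) = D := by
      rw [hDdef, SplitAux.vand_def, map_prod]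
      exact Finset.prod_congr rfl fun p _ => by rw [map_sub]; rfl
    have hreg' : ∀ z : SplittingAlgebra B f n, z * D = 0 → z = 0 := by
      intro z hz
      refine mem_nonZeroDivisors_iff_right.mp hreg z ?_
      have h2 : (∏ p ∈ Finset.univ.filter (fun p : Fin n × Fin n => p.2 < p.1),
          (univRoot B f n p.1 - univRoot B f n p.2) ^ 2) = D ^ 2 := by
        rw [Finset.prod_pow, hD]
      rw [h2, pow_two, ← mul_assoc, hz, zero_mul]
    set T : MvPolynomial (Fin n) B := ∏ i : Fin n, (X i) ^ (i : ℕ) with hTdef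
    set Tz : MvPolynomial (Fin n) ℤ := ∏ i : Fin n, (X i) ^ (i : ℕ) with hTzdef
    have hmapT : MvPolynomial.map (Int.castRingHom B) Tz = T := by
      rw [hTdef, hTzdef, map_prod]
      refine Finset.prod_congr rfl fun i _ => ?_
      rw [map_pow, MvPolynomial.map_X]
    -- claim 1 : mk (asym (T * P)) = D * mk P
    have claim1 : (mkS B f n (SplitAux.asym B n (T * P)) : SplittingAlgebra B f n)
        = D * (mkS B f n P : SplittingAlgebra B f n) := by
      rw [SplitAux.asym_def, map_sum]
      have h1 : ∀ σ : Equiv.Perm (Fin n),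
          (mkS B f n ((Equiv.Perm.sign σ : ℤ) • rename (⇑σ) (T * P))
              : SplittingAlgebra B f n)
            = ((Equiv.Perm.sign σ : ℤ) •
                (mkS B f n (rename (⇑σ) T) : SplittingAlgebra B f n))
              * (mkS B f n P : SplittingAlgebra B f n) := by
        intro σ
        rw [map_zsmul, _root_.map_mul (rename (⇑σ)), _root_.map_mul (mkS B f n),
          hfix σ, smul_mul_assoc]
      simp_rw [h1]
      erw [← Finset.sum_mul]
      congr 1
      have h2 : (∑ σ : Equiv.Perm (Fin n),
          (Equiv.Perm.sign σ : ℤ) •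
            (mkS B f n (rename (⇑σ) T) : SplittingAlgebra B f n))
            = (mkS B f n (SplitAux.vand B n) : SplittingAlgebra B f n) := by
        rw [← SplitAux.asym_T_eq_vand (R := B), SplitAux.asym_def, map_sum]
        exact Finset.sum_congr rfl fun σ _ => (map_zsmul (mkS B f n) _ _).symm
      erw [h2, ← hDdef]
    -- claim 2 : decomposition into monomials
    have claim2 : SplitAux.asym B n (T * P)
        = ∑ a ∈ P.support, MvPolynomial.C (MvPolynomial.coeff a P)
            * MvPolynomial.map (Int.castRingHom B)
              (SplitAux.asym ℤ n (Tz * MvPolynomial.monomial a 1)) := by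
      have hTP : T * P = ∑ a ∈ P.support,
          MvPolynomial.C (MvPolynomial.coeff a P) * (T * MvPolynomial.monomial a 1) := by
        conv_lhs => rw [MvPolynomial.as_sum P]
        rw [Finset.mul_sum]
        refine Finset.sum_congr rfl fun a _ => ?_
        have hma : (MvPolynomial.monomial a) (MvPolynomial.coeff a P)
            = MvPolynomial.C (MvPolynomial.coeff a P) * MvPolynomial.monomial a 1 := by
          rw [MvPolynomial.C_mul_monomial, mul_one]
        rw [hma]; ring
      rw [hTP, SplitAux.asym_sum]
      refine Finset.sum_congr rfl fun a _ => ?_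
      rw [SplitAux.asym_C_mul, SplitAux.map_asym, _root_.map_mul, hmapT,
        MvPolynomial.map_monomial]
      norm_num
    -- the defining relations : mk esymm = constants
    have hmk_esymm : ∀ i : Fin n,
        (mkS B f n (esymm (Fin n) B ((i : ℕ) + 1)) : SplittingAlgebra B f n)
          = algebraMap B (SplittingAlgebra B f n)
              ((-1 : B) ^ ((i : ℕ) + 1) * f.coeff (n - ((i : ℕ) + 1))) := by
      intro i
      have hmem : esymm (Fin n) B ((i : ℕ) + 1)
          - MvPolynomial.C ((-1 : B) ^ ((i : ℕ) + 1) * f.coeff (n - ((i : ℕ) + 1))) ∈ splittingIdeal B f n :=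
        Ideal.subset_span ⟨i, rfl⟩
      exact (Ideal.Quotient.eq).mpr hmem
    -- symmetric polynomials over ℤ land in the base ring
    have key : ∀ Ra : MvPolynomial (Fin n) ℤ,
        (mkS B f n (MvPolynomial.map (Int.castRingHom B)
            (aeval (fun i : Fin n => esymm (Fin n) ℤ ((i : ℕ) + 1)) Ra))
          : SplittingAlgebra B f n)
          ∈ (algebraMap B (SplittingAlgebra B f n)).range := by
      intro Ra
      induction Ra using MvPolynomial.induction_on with
      | C r =>
          rw [MvPolynomial.aeval_C]
          refine ⟨((r : ℤ) : B), ?_⟩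
          rw [show (algebraMap ℤ (MvPolynomial (Fin n) ℤ)) r = MvPolynomial.C r from rfl,
            MvPolynomial.map_C]
          rfl
      | add p q hp hq =>
          rw [map_add, map_add, map_add]
          exact add_mem hp hq
      | mul_X p i hp =>
          rw [_root_.map_mul, _root_.map_mul, _root_.map_mul, MvPolynomial.aeval_X]
          refine mul_mem hp ?_
          rw [map_esymm, hmk_esymm i]
          exact ⟨_, rfl⟩
    -- existence of the base factor for each monomial
    have hex : ∀ a : Fin n →₀ ℕ,
        ∃ w ∈ (algebraMap B (SplittingAlgebra B f n)).range,
          (mkS B f n (MvPolynomial.map (Int.castRingHom B)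
            (SplitAux.asym ℤ n (Tz * MvPolynomial.monomial a 1))) : SplittingAlgebra B f n)
              = D * w := by
      intro a
      obtain ⟨Q, hQ, hsym⟩ := SplitAux.exists_symm_quotient (Tz * MvPolynomial.monomial a 1)
      obtain ⟨Ra, hRa⟩ := esymmAlgHom_surjective (σ := Fin n) (R := ℤ) (n := n)
        (by simp) ⟨Q, hsym⟩
      have hQval : aeval (fun i : Fin n => esymm (Fin n) ℤ ((i : ℕ) + 1)) Ra = Q := by
        have h3 := congrArg Subtype.val hRa
        rwa [esymmAlgHom_apply] at h3
      refine ⟨mkS B f n (MvPolynomial.map (Int.castRingHom B) Q), ?_, ?_⟩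
      · rw [← hQval]
        exact key Ra
      · rw [hQ, _root_.map_mul, _root_.map_mul, SplitAux.map_vand, ← hDdef]
    choose w hwmem hw using hex
    set S : SplittingAlgebra B f n := ∑ a ∈ P.support,
      algebraMap B (SplittingAlgebra B f n) (MvPolynomial.coeff a P) * w a with hSdef
    have hSmem : S ∈ (algebraMap B (SplittingAlgebra B f n)).range :=
      sum_mem fun a _ => mul_mem ⟨_, rfl⟩ (hwmem a)
    have final : D * (mkS B f n P : SplittingAlgebra B f n) = D * S := by
      rw [← claim1, claim2, map_sum, hSdef]
      erw [Finset.mul_sum]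
      refine Finset.sum_congr rfl fun a _ => ?_
      rw [_root_.map_mul (mkS B f n), hw a,
        show (mkS B f n (MvPolynomial.C (MvPolynomial.coeff a P))
            : SplittingAlgebra B f n)
          = algebraMap B (SplittingAlgebra B f n) (MvPolynomial.coeff a P) from rfl]
      ring
    have hzero : ((mkS B f n P : SplittingAlgebra B f n) - S) * D = 0 := by
      rw [sub_mul, mul_comm ((mkS B f n P : SplittingAlgebra B f n)) D, final,
        mul_comm S D, sub_self]
    have h6 := sub_eq_zero.mp (hreg' _ hzero)
    exact h6 ▸ hSmem
  · rintro ⟨b, rfl⟩ σ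
    exact (permHom B f n σ).commutes b
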